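/- (Dominance theorem.) Fix H ⊆ J, deadline M, and uncertainty set Δ. Define X_H = { x schedule of G(p) with x_t ≤ M : x_j − x_i ≥ L^Δ(i,j) for all i ∈ H∪{s}, j ∈ H, i ≺ j } and Z_H = { z schedule of G(p) with z_t ≤ M : z_j − z_i ≥ L^Δ(i,j) for all i ∈ J∪{s}, j ∈ H, i ≺ j }. Then Z_H ⊆ X_H, and if X_H is nonempty then Z_H is nonempty. -/

import Mathlib

/-- Length of a path (given as a list of vertices) when each arc `(i,j)` has
length `q i` (the duration of its source vertex). -/
def PathLen {V : Type*} (q : V → ℝ) (l : List V) : ℝ := (l.dropLast.map q).sum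

/-- `l` is a path from `i` to `j` in the digraph with arc relation `A`. -/
def IsPath {V : Type*} (A : V → V → Prop) (i j : V) (l : List V) : Prop :=
  l ≠ [] ∧ l.Chain' A ∧ l.head? = some i ∧ l.getLast? = some j

/-- Length of a path for arc-indexed weights `w`. -/
def LenW {V : Type*} (w : V → V → ℝ) : List V → ℝ
  | a :: b :: l => w a b + LenW w (b :: l)
  | _ => 0

/-- `x` is a schedule of the precedence graph `(V, A)` with durations `q` and source `s`. -/
def Sched {V : Type*} (A : V → V → Prop) (s : V) (q x : V → ℝ) : Prop :=
  x s = 0 ∧ (∀ v, 0 ≤ x v) ∧ ∀ i j, A i j → q i ≤ x j - x i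

/-- `H` is `x`-anchored for the uncertainty set `Δ`. -/
def XAnchored {V : Type*} (A : V → V → Prop) (s : V) (p : V → ℝ)
    (Δ : Set (V → ℝ)) (x : V → ℝ) (H : Set V) : Prop :=
  ∀ δ ∈ Δ, ∃ y, Sched A s (fun v => p v + δ v) y ∧ ∀ i ∈ H, y i = x i

/-- `L` is the longest `i`–`j` path length under durations `q`. -/
def IsLongest {V : Type*} (A : V → V → Prop) (q : V → ℝ) (i j : V) (L : ℝ) : Prop :=
  IsGreatest {r | ∃ l, IsPath A i j l ∧ PathLen q l = r} L

/-- `L` is the worst-case longest `i`–`j` path length over the uncertainty set `Δ`. -/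
def IsWorst {V : Type*} (A : V → V → Prop) (p : V → ℝ) (Δ : Set (V → ℝ))
    (i j : V) (L : ℝ) : Prop :=
  IsGreatest {r | ∃ δ ∈ Δ, ∃ l, IsPath A i j l ∧ PathLen (fun v => p v + δ v) l = r} L

lemma pathLen_nonneg {V : Type*} {q : V → ℝ} (hq : ∀ v, 0 ≤ q v) (l : List V) :
    0 ≤ PathLen q l := by
  refine List.sum_nonneg ?_
  intro r hr
  simp only [List.mem_map] at hr
  obtain ⟨a, -, rfl⟩ := hr
  exact hq a

lemma isPath_cons {V : Type*} {A : V → V → Prop} {v j u : V} {l : List V}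
    (hl : IsPath A v j l) (h : A u v) (q : V → ℝ) :
    IsPath A u j (u :: l) ∧ PathLen q (u :: l) = q u + PathLen q l := by
  obtain ⟨hne, hch, hh, hg⟩ := hl
  cases l with
  | nil => simp at hne
  | cons a l' =>
    simp only [List.head?_cons, Option.some.injEq] at hh
    subst hh
    refine ⟨⟨by simp, List.isChain_cons_cons.mpr ⟨h, hch⟩, by simp, ?_⟩, ?_⟩
    · simpa using hg
    · simp [PathLen]

lemma exists_path_of_transGen {V : Type*} {A : V → V → Prop} {i j : V}
    (h : Relation.TransGen A i j) : ∃ l, IsPath A i j l := by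
  induction h using Relation.TransGen.head_induction_on with
  | single h =>
    rename_i a
    exact ⟨[a, j], by simp, List.isChain_pair.mpr h, by simp, by simp⟩
  | head h _ ih' =>
    obtain ⟨l, hl⟩ := ih'
    exact ⟨_ :: l, (isPath_cons hl h (fun _ => 0)).1⟩

lemma exists_path_extend {V : Type*} {A : V → V → Prop} {q : V → ℝ} (hq : ∀ v, 0 ≤ q v)
    {u v j : V} {l : List V} (huv : Relation.TransGen A u v) (hl : IsPath A v j l) :
    ∃ l', IsPath A u j l' ∧ PathLen q l ≤ PathLen q l' := by
  induction huv using Relation.TransGen.head_induction_on with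
  | single h =>
    rename_i a
    obtain ⟨h1, h2⟩ := isPath_cons hl h q
    exact ⟨_, h1, by have := hq a; linarith⟩
  | head h _ ih' =>
    rename_i a b _
    obtain ⟨l', hl', hle⟩ := ih'
    obtain ⟨h1, h2⟩ := isPath_cons hl' h q
    exact ⟨_, h1, by have := hq a; linarith⟩

/-- dominance theorem: `Z_H ⊆ X_H`, and `X_H ≠ ∅` implies `Z_H ≠ ∅`,
where `X_H` imposes the worst-case longest-path separations only from `H ∪ {s}` to `H`,
while `Z_H` imposes them from all of `J ∪ {s}` to `H`. -/
theorem dominance_theorem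
    {V : Type*} [Fintype V] (A : V → V → Prop) (s t : V)
    (p : V → ℝ) (hp : ∀ v, 0 ≤ p v) (hps : p s = 0)
    (hacyc : ∀ v, ¬ Relation.TransGen A v v)
    (hsrc : ∀ v, v ≠ s → Relation.TransGen A s v)
    (hsink : ∀ v, v ≠ t → Relation.TransGen A v t)
    (Δ : Set (V → ℝ)) (hΔne : Δ.Nonempty) (hΔnonneg : ∀ δ ∈ Δ, ∀ v, 0 ≤ δ v)
    (hΔst : ∀ δ ∈ Δ, δ s = 0 ∧ δ t = 0)
    (LΔ : V → V → ℝ)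
    (hLΔ : ∀ i j, Relation.TransGen A i j → IsWorst A p Δ i j (LΔ i j))
    (H : Set V) (hHs : s ∉ H) (hHt : t ∉ H) (M : ℝ) :
    ({z : V → ℝ | Sched A s p z ∧ z t ≤ M ∧ ∀ i j, i ≠ t → j ∈ H →
        Relation.TransGen A i j → LΔ i j ≤ z j - z i} ⊆
      {x : V → ℝ | Sched A s p x ∧ x t ≤ M ∧ ∀ i j, (i ∈ H ∨ i = s) → j ∈ H →
        Relation.TransGen A i j → LΔ i j ≤ x j - x i}) ∧
    (({x : V → ℝ | Sched A s p x ∧ x t ≤ M ∧ ∀ i j, (i ∈ H ∨ i = s) → j ∈ H →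
        Relation.TransGen A i j → LΔ i j ≤ x j - x i}).Nonempty →
      ({z : V → ℝ | Sched A s p z ∧ z t ≤ M ∧ ∀ i j, i ≠ t → j ∈ H →
        Relation.TransGen A i j → LΔ i j ≤ z j - z i}).Nonempty) := by
  classical
  -- key composition lemmas about LΔ
  have keyA : ∀ v j, v ≠ s → j ∈ H → Relation.TransGen A v j → LΔ v j ≤ LΔ s j := by
    intro v j hv hj hvj
    have hsv := hsrc v hv
    obtain ⟨⟨δ, hδ, l, hlp, hlen⟩, -⟩ := hLΔ v j hvj
    have hq : ∀ w, 0 ≤ p w + δ w := fun w => add_nonneg (hp w) (hΔnonneg δ hδ w)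
    obtain ⟨l', hl', hle⟩ := exists_path_extend hq hsv hlp
    have hub := (hLΔ s j (hsv.trans hvj)).2 ⟨δ, hδ, l', hl', rfl⟩
    calc LΔ v j = PathLen (fun w => p w + δ w) l := hlen.symm
      _ ≤ PathLen (fun w => p w + δ w) l' := hle
      _ ≤ LΔ s j := hub
  have keyB : ∀ i i' k, A i i' → Relation.TransGen A i' k → p i + LΔ i' k ≤ LΔ i k := by
    intro i i' k h hik
    obtain ⟨⟨δ, hδ, l, hlp, hlen⟩, -⟩ := hLΔ i' k hik
    obtain ⟨h1, h2⟩ := isPath_cons hlp h (fun w => p w + δ w)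
    have hub := (hLΔ i k (Relation.TransGen.head h hik)).2 ⟨δ, hδ, i :: l, h1, rfl⟩
    have hδi := hΔnonneg δ hδ i
    rw [h2, hlen] at hub
    linarith
  constructor
  · rintro z ⟨hzS, hzM, hz⟩
    refine ⟨hzS, hzM, ?_⟩
    intro i j hi hj hij
    rcases hi with hi | rfl
    · exact hz i j (fun h => hHt (h ▸ hi)) hj hij
    · by_cases hst : i = t
      · exfalso
        have hjs : j ≠ i := fun h => hHs (h ▸ hj)
        have hjt : j ≠ t := fun h => hHt (h ▸ hj)
        have h1 := hsrc j hjs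
        have h2 := hsink j hjt
        exact hacyc i (h1.trans (hst ▸ h2))
      · exact hz i j hst hj hij
  · rintro ⟨x, hxS, hxM, hxH⟩
    obtain ⟨hxs0, hxpos, hxarc⟩ := hxS
    set S : V → Finset ℝ := fun v => insert (x v)
      ((Finset.univ.filter (fun j => j ∈ H ∧ Relation.TransGen A v j)).image
        fun j => x j - LΔ v j) with hS
    have hSne : ∀ v, (S v).Nonempty := fun v => ⟨x v, Finset.mem_insert_self _ _⟩
    set z : V → ℝ := fun v => (S v).min' (hSne v) with hz
    have hzx : ∀ v, z v ≤ x v := fun v => Finset.min'_le _ _ (Finset.mem_insert_self _ _)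
    have hzb : ∀ v j, j ∈ H → Relation.TransGen A v j → z v ≤ x j - LΔ v j := by
      intro v j hj hvj
      refine Finset.min'_le _ _ (Finset.mem_insert_of_mem ?_)
      exact Finset.mem_image.mpr ⟨j, Finset.mem_filter.mpr ⟨Finset.mem_univ j, hj, hvj⟩, rfl⟩
    have hle : ∀ v c, c ≤ x v → (∀ j, j ∈ H → Relation.TransGen A v j → c ≤ x j - LΔ v j) →
        c ≤ z v := by
      intro v c h1 h2
      refine Finset.le_min' _ _ _ ?_
      intro y hy
      rcases Finset.mem_insert.mp hy with rfl | hy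
      · exact h1
      · obtain ⟨j, hj, rfl⟩ := Finset.mem_image.mp hy
        obtain ⟨-, hjH, hvj⟩ := Finset.mem_filter.mp hj
        exact h2 j hjH hvj
    have hz0 : ∀ v, 0 ≤ z v := by
      intro v
      refine hle v 0 (hxpos v) ?_
      intro j hj hvj
      by_cases hv : v = s
      · have h := hxH v j (Or.inr hv) hj hvj
        have hx0 : x v = 0 := by rw [hv]; exact hxs0
        linarith
      · have h1 := keyA v j hv hj hvj
        have h2 := hxH s j (Or.inr rfl) hj ((hsrc v hv).trans hvj)
        rw [hxs0] at h2
        linarith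
    have hzH : ∀ j ∈ H, z j = x j := by
      intro j hj
      refine le_antisymm (hzx j) (hle j (x j) le_rfl ?_)
      intro k hk hjk
      have := hxH j k (Or.inl hj) hk hjk
      linarith
    have hzs : z s = 0 := by
      refine le_antisymm ?_ (hz0 s)
      have := hzx s
      rw [hxs0] at this
      exact this
    have harc : ∀ i i', A i i' → p i ≤ z i' - z i := by
      intro i i' h
      have : z i + p i ≤ z i' := by
        refine hle i' (z i + p i) ?_ ?_
        · have h1 := hzx i
          have h2 := hxarc i i' h
          linarith
        · intro k hk hik
          have h1 := hzb i k hk (Relation.TransGen.head h hik)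
          have h2 := keyB i i' k h hik
          linarith
      linarith
    refine ⟨z, ⟨hzs, hz0, harc⟩, le_trans (hzx t) hxM, ?_⟩
    intro i j _ hj hij
    have h1 := hzb i j hj hij
    rw [hzH j hj] at *
    linarith
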